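/- Let P be a poset with least element 0 and let Z be a lower complete sublattice of P which is P-central and Z-modular. If p ∈ P, z ∈ Z and the infimum p∧z exists in P, then c_Z(p∧z) = c_Z(p)∧z, where c_Z(p)∧z denotes the infimum in P of c_Z(p) and z. -/
import Mathlib


/-- `S` is `Z`-disjoint: there is `f : S → Z` with `p ≤ f p` and `f p ∧ f q = 0`
for distinct `p, q ∈ S`. -/
def ZDisjoint {β : Type*} [PartialOrder β] [OrderBot β] (Z S : Set β) : Prop :=
  ∃ f : β → β, (∀ p ∈ S, f p ∈ Z ∧ p ≤ f p) ∧
    ∀ p ∈ S, ∀ q ∈ S, p ≠ q → Disjoint (f p) (f q)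

/-- `I` is `Z`-complete: every `Z`-disjoint `S ⊆ I` has a supremum lying in `I`, and
whenever `{p, q}` is `Z`-disjoint with supremum in `I`, both `p` and `q` lie in `I`. -/
def ZComplete {β : Type*} [PartialOrder β] [OrderBot β] (Z I : Set β) : Prop :=
  (∀ S ⊆ I, ZDisjoint Z S → ∃ s, IsLUB S s ∧ s ∈ I) ∧
  (∀ p q s, ZDisjoint Z {p, q} → IsLUB {p, q} s → s ∈ I → p ∈ I ∧ q ∈ I)

/-- `Z` is `S`-central: for every `p ∈ S` and `y ∈ Z` there is `z ∈ Z` with `y ∧ z = 0`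
and `p` the supremum of some `q ≤ y` and `r ≤ z`. -/
def SCentral {β : Type*} [PartialOrder β] [OrderBot β] (Z S : Set β) : Prop :=
  ∀ p ∈ S, ∀ y ∈ Z, ∃ z ∈ Z, Disjoint y z ∧ ∃ q r, q ≤ y ∧ r ≤ z ∧ IsLUB {q, r} p
/-- `Z` is `Z`-modular: whenever `y, z ∈ Z` with `y ∧ z = 0`, `p, q ∈ Z` with `p ≤ y`,
`q ≤ z` and `p, q` have a least upper bound `s` within the subposet `Z`, then `q` is the
greatest lower bound within `Z` of `z` and `s`. -/
def ZModular {β : Type*} [PartialOrder β] [OrderBot β] (Z : Set β) : Prop :=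
  ∀ y ∈ Z, ∀ z ∈ Z, Disjoint y z → ∀ p ∈ Z, ∀ q ∈ Z, p ≤ y → q ≤ z →
    ∀ s ∈ Z, (p ≤ s ∧ q ≤ s ∧ ∀ w ∈ Z, p ≤ w → q ≤ w → s ≤ w) →
      (q ≤ s ∧ ∀ w ∈ Z, w ≤ z → w ≤ s → w ≤ q)
/-- If `Z` is a `Z`-modular `P`-central lower complete sublattice of `P`, `p ∈ P`,
`z ∈ Z` and the infimum `p ∧ z` exists in `P`, then `c_Z (p ∧ z) = c_Z p ∧ z`, i.e.
`c_Z (p ∧ z)` is the infimum in `P` of `c_Z p` and `z`. -/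
theorem stmt8 {α : Type*} [PartialOrder α] [OrderBot α] (Z : Set α) (c : α → α)
    (hZl : ∀ S ⊆ Z, ∃ i, IsGLB S i ∧ i ∈ Z)
    (hc : ∀ p, c p ∈ Z ∧ IsGLB {z | z ∈ Z ∧ p ≤ z} (c p))
    (hcen : SCentral Z Set.univ) (hzm : ZModular Z) :
    ∀ p : α, ∀ z ∈ Z, ∀ w, IsGLB {p, z} w → IsGLB {c p, z} (c w) := by
  have hle : ∀ p : α, p ≤ c p := fun p => (hc p).2.2 fun u hu => hu.2
  have hcle : ∀ p u, u ∈ Z → p ≤ u → c p ≤ u := fun p u hu hpu => (hc p).2.1 ⟨hu, hpu⟩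
  have hmono : ∀ p q : α, p ≤ q → c p ≤ c q := fun p q h =>
    hcle p (c q) (hc q).1 (h.trans (hle q))
  intro p z hz w hw
  have hwp : w ≤ p := hw.1 (Set.mem_insert _ _)
  have hwz : w ≤ z := hw.1 (Set.mem_insert_iff.mpr (Or.inr rfl))
  obtain ⟨z', hz', hdisj, q, r, hq, hr, hlub⟩ := hcen p trivial z hz
  have hqp : q ≤ p := hlub.1 (Set.mem_insert _ _)
  have hrp : r ≤ p := hlub.1 (Set.mem_insert_iff.mpr (Or.inr rfl))
  have hqw : q ≤ w := hw.2 (by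
    rintro x (h | h) <;> rw [h]
    exacts [hqp, hq])
  have hcq : c q ≤ z := hcle q z hz hq
  have hcr : c r ≤ z' := hcle r z' hz' hr
  have hsupq : c q ≤ c p := hmono q p hqp
  have hsupr : c r ≤ c p := hmono r p hrp
  have hsup : ∀ u ∈ Z, c q ≤ u → c r ≤ u → c p ≤ u := by
    intro u hu h1 h2
    refine hcle p u hu (hlub.2 ?_)
    rintro x (h | h) <;> rw [h]
    · exact (hle q).trans h1
    · exact (hle r).trans h2
  have hmod := hzm z' hz' z hz hdisj.symm (c r) (hc r).1 (c q) (hc q).1 hcr hcq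
    (c p) (hc p).1 ⟨hsupr, hsupq, fun u hu h1 h2 => hsup u hu h2 h1⟩
  constructor
  · rintro x (h | h) <;> rw [h]
    · exact hmono w p hwp
    · exact hcle w z hz hwz
  · intro v hv
    have hv1 : v ≤ c p := hv (Set.mem_insert _ _)
    have hv2 : v ≤ z := hv (Set.mem_insert_iff.mpr (Or.inr rfl))
    have hcv : c v ≤ c q :=
      hmod.2 (c v) (hc v).1 (hcle v z hz hv2) (hcle v (c p) (hc p).1 hv1)
    exact (hle v).trans (hcv.trans (hmono q w hqw))
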